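/- The function s(t) = ŝ·e^{2ŝt/τ}/(e^{2ŝt/τ} - 1 + ŝ/ε), with ŝ > 0, τ > 0, 0 < ε < ŝ, satisfies the differential equation τ·(ds/dt) = 2s(ŝ - s) with initial condition s(0) = ε. -/

import Mathlib

/-- The learning curve `s(t) = ŝ·e^{2ŝt/τ}/(e^{2ŝt/τ} - 1 + ŝ/ε)` satisfies
`τ·s'(t) = 2·s(t)·(ŝ - s(t))` with `s(0) = ε`. -/
theorem learning_curve_ode (shat τ ε : ℝ) (hs : 0 < shat) (hτ : 0 < τ)
    (hε : 0 < ε) (hεs : ε < shat) :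
    (fun t : ℝ => shat * Real.exp (2 * shat * t / τ) /
        (Real.exp (2 * shat * t / τ) - 1 + shat / ε)) 0 = ε ∧
    ∀ t : ℝ,
      HasDerivAt (fun t : ℝ => shat * Real.exp (2 * shat * t / τ) /
          (Real.exp (2 * shat * t / τ) - 1 + shat / ε))
        (2 * (shat * Real.exp (2 * shat * t / τ) /
            (Real.exp (2 * shat * t / τ) - 1 + shat / ε)) *
          (shat - shat * Real.exp (2 * shat * t / τ) /
            (Real.exp (2 * shat * t / τ) - 1 + shat / ε)) / τ) t := by
  have hc : (1 : ℝ) < shat / ε := (one_lt_div hε).2 hεs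
  have hD : ∀ t : ℝ, Real.exp (2 * shat * t / τ) - 1 + shat / ε ≠ 0 := by
    intro t
    have := Real.exp_pos (2 * shat * t / τ)
    nlinarith
  constructor
  · simp only
    rw [show 2 * shat * (0:ℝ) / τ = 0 by ring, Real.exp_zero]
    field_simp
    ring
  · intro t
    have hexp : HasDerivAt (fun t : ℝ => Real.exp (2 * shat * t / τ))
        (2 * shat / τ * Real.exp (2 * shat * t / τ)) t := by
      have h1 : HasDerivAt (fun t : ℝ => 2 * shat * t / τ) (2 * shat / τ) t := by
        simpa using ((hasDerivAt_id t).const_mul (2 * shat)).div_const τ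
      simpa [mul_comm, Function.comp_def] using (Real.hasDerivAt_exp (2 * shat * t / τ)).comp t h1
    have hnum : HasDerivAt (fun t : ℝ => shat * Real.exp (2 * shat * t / τ))
        (shat * (2 * shat / τ * Real.exp (2 * shat * t / τ))) t := hexp.const_mul shat
    have hden : HasDerivAt (fun t : ℝ => Real.exp (2 * shat * t / τ) - 1 + shat / ε)
        (2 * shat / τ * Real.exp (2 * shat * t / τ)) t := by
      simpa using (hexp.sub_const 1).add_const (shat / ε)
    have := hnum.div hden (hD t)
    refine this.congr_deriv ?_
    have h := hD t
    have hεne := hε.ne'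
    have hτne := hτ.ne'
    set E := Real.exp (2 * shat * t / τ) with hE
    set D := E - 1 + shat / ε with hDdef
    field_simp
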